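/- For every integer d ≥ 1, the Vapnik–Chervonenkis dimension of the family 𝓒_d of all closed balls in ℓ∞^d equals ⌊(3d+1)/2⌋. -/

import Mathlib

open Set Metric

/-- A family `E` of subsets of `X` shatters a set `σ` if every subset of `σ`
is carved out by some member of `E`. -/
def Shatters {X : Type*} (E : Set (Set X)) (σ : Set X) : Prop :=
  ∀ T ⊆ σ, ∃ C ∈ E, C ∩ σ = T

/-- Vapnik–Chervonenkis dimension: supremum of cardinalities of finite shattered sets. -/
noncomputable def vcDim {X : Type*} (E : Set (Set X)) : ℕ∞ :=
  ⨆ (σ : Finset X) (_ : Shatters E ↑σ), (σ.card : ℕ∞)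

/-- The family of all closed balls in `ℓ∞^d` (sup-norm balls = axis-parallel cubes,
including singletons as balls of radius 0). -/
def Cd (d : ℕ) : Set (Set (Fin d → ℝ)) :=
  {C | ∃ x : Fin d → ℝ, ∃ r : ℝ, 0 ≤ r ∧ C = Metric.closedBall x r}

/-- A closed degenerate ball in `ℓ∞^d`: a product of closed intervals, each of which is
unbounded on at least one side, i.e. of the form `(-∞, b]`, `[a, ∞)` or all of `ℝ`. -/
def IsDegBall {d : ℕ} (C : Set (Fin d → ℝ)) : Prop :=
  ∃ I : Fin d → Set ℝ,
    (∀ i, (∃ b, I i = Set.Iic b) ∨ (∃ a, I i = Set.Ici a) ∨ I i = Set.univ) ∧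
    C = {x | ∀ i, x i ∈ I i}

/-- The family of all closed degenerate balls in `ℓ∞^d`. -/
def Dd (d : ℕ) : Set (Set (Fin d → ℝ)) := {C | IsDegBall C}

/-- The family of closed degenerate balls in `ℓ∞^d` containing the set `F`. -/
def DdF (d : ℕ) (F : Set (Fin d → ℝ)) : Set (Set (Fin d → ℝ)) :=
  {C | IsDegBall C ∧ F ⊆ C}

/-- The family of closed degenerate balls in `ℓ∞^d` containing the origin. -/
def Dd0 (d : ℕ) : Set (Set (Fin d → ℝ)) := DdF d {0}

open scoped Classical

noncomputable section
namespace VCC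

lemma mem_cball_pi {d : ℕ} (c x : Fin d → ℝ) {r : ℝ} (hr : 0 ≤ r) :
    x ∈ Metric.closedBall c r ↔ ∀ i, |x i - c i| ≤ r := by
  simp [Metric.mem_closedBall, dist_pi_le_iff hr, Real.dist_eq]

def bv1 (j : ℕ) : ℝ := if j = 0 then 8 else if j = 1 then 4 else 0
def bv2 (j : ℕ) : ℝ := if j = 0 then 4 else if j = 1 then 0 else 8

def pt (d m : ℕ) : Fin d → ℝ := fun i =>
  if m < 3 * (d / 2) then
    if (i : ℕ) / 2 = m / 3 then
      (if (i : ℕ) % 2 = 0 then bv1 (m % 3) else bv2 (m % 3))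
    else if (i : ℕ) < 2 * (d / 2) then 2 else 0
  else if (i : ℕ) < 2 * (d / 2) then 2
  else if m = 3 * (d / 2) then 100 else -100

def np (d : ℕ) : ℕ := 3 * (d / 2) + 2 * (d % 2)

def Rad (d : ℕ) (E : ℕ → Prop) : ℝ :=
  if d % 2 = 1 ∧ E (3 * (d / 2)) ∧ E (3 * (d / 2) + 1) then 10 else 1000

lemma Rad_ge (d : ℕ) (E : ℕ → Prop) : 10 ≤ Rad d E := by
  unfold Rad; split_ifs <;> norm_num

/-- center for first coordinate of a block -/
def cc1 (R : ℝ) (A B C : Prop) : ℝ :=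
  if A ∧ B then 3 - R else if A ∧ ¬B ∧ ¬C then 6 - R else if C ∧ ¬A then 1 + R else 0
/-- center for second coordinate of a block -/
def cc2 (R : ℝ) (A B C : Prop) : ℝ :=
  if A ∧ B ∧ C then 6 - R else if A ∧ ¬B ∧ C then 3 - R else if B ∧ ¬A then 1 + R else 0
/-- center for the extra coordinate -/
def ccx (R : ℝ) (P Q : Prop) : ℝ := if P then -R else if Q then R else 0

def ctr (d : ℕ) (E : ℕ → Prop) : Fin d → ℝ := fun i =>
  if (i : ℕ) < 2 * (d / 2) then
    (if (i : ℕ) % 2 = 0 then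
       cc1 (Rad d E) (E (3 * ((i:ℕ)/2))) (E (3 * ((i:ℕ)/2) + 1)) (E (3 * ((i:ℕ)/2) + 2))
     else
       cc2 (Rad d E) (E (3 * ((i:ℕ)/2))) (E (3 * ((i:ℕ)/2) + 1)) (E (3 * ((i:ℕ)/2) + 2)))
  else ccx (Rad d E) (E (3 * (d / 2))) (E (3 * (d / 2) + 1))

-- block arithmetic lemmas
variable {R : ℝ} {A B C : Prop}

lemma keptA (hR : 10 ≤ R) (h : ¬A) :
    |8 - cc1 R A B C| ≤ R ∧ |4 - cc2 R A B C| ≤ R := by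
  unfold cc1 cc2; constructor <;> split_ifs <;> rw [abs_le] <;> constructor <;>
    first | tauto | linarith
lemma keptB (hR : 10 ≤ R) (h : ¬B) :
    |4 - cc1 R A B C| ≤ R ∧ |0 - cc2 R A B C| ≤ R := by
  unfold cc1 cc2; constructor <;> split_ifs <;> rw [abs_le] <;> constructor <;>
    first | tauto | linarith
lemma keptC (hR : 10 ≤ R) (h : ¬C) :
    |0 - cc1 R A B C| ≤ R ∧ |8 - cc2 R A B C| ≤ R := by
  unfold cc1 cc2; constructor <;> split_ifs <;> rw [abs_le] <;> constructor <;>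
    first | tauto | linarith
lemma exclA (hR : 10 ≤ R) (h : A) (h1 : |8 - cc1 R A B C| ≤ R)
    (h2 : |4 - cc2 R A B C| ≤ R) : False := by
  unfold cc1 at h1; unfold cc2 at h2; split_ifs at h1 h2 <;> rw [abs_le] at h1 h2 <;>
    first | tauto | linarith [h1.1, h1.2, h2.1, h2.2]
lemma exclB (hR : 10 ≤ R) (h : B) (h1 : |4 - cc1 R A B C| ≤ R)
    (h2 : |0 - cc2 R A B C| ≤ R) : False := by
  unfold cc1 at h1; unfold cc2 at h2; split_ifs at h1 h2 <;> rw [abs_le] at h1 h2 <;>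
    first | tauto | linarith [h1.1, h1.2, h2.1, h2.2]
lemma exclC (hR : 10 ≤ R) (h : C) (h1 : |0 - cc1 R A B C| ≤ R)
    (h2 : |8 - cc2 R A B C| ≤ R) : False := by
  unfold cc1 at h1; unfold cc2 at h2; split_ifs at h1 h2 <;> rw [abs_le] at h1 h2 <;>
    first | tauto | linarith [h1.1, h1.2, h2.1, h2.2]
lemma foreign1 (hR : 10 ≤ R) : |2 - cc1 R A B C| ≤ R := by
  unfold cc1; split_ifs <;> rw [abs_le] <;> constructor <;> linarith
lemma foreign2 (hR : 10 ≤ R) : |2 - cc2 R A B C| ≤ R := by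
  unfold cc2; split_ifs <;> rw [abs_le] <;> constructor <;> linarith
lemma keptx0 {P Q : Prop} (hR : 10 ≤ R) : |0 - ccx R P Q| ≤ R := by
  unfold ccx; split_ifs <;> rw [abs_le] <;> constructor <;> linarith

-- unfolding lemmas for pt
lemma pt_own1 (d m : ℕ) (hb : m < 3*(d/2)) (i : Fin d) (h : (i:ℕ) = 2*(m/3)) :
    pt d m i = bv1 (m % 3) := by
  unfold pt; rw [if_pos hb, if_pos (by omega), if_pos (by omega)]
lemma pt_own2 (d m : ℕ) (hb : m < 3*(d/2)) (i : Fin d) (h : (i:ℕ) = 2*(m/3)+1) :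
    pt d m i = bv2 (m % 3) := by
  unfold pt; rw [if_pos hb, if_pos (by omega), if_neg (by omega)]
lemma pt_forb (d m : ℕ) (hb : m < 3*(d/2)) (i : Fin d) (hne : (i:ℕ)/2 ≠ m/3)
    (h2 : (i:ℕ) < 2*(d/2)) : pt d m i = 2 := by
  unfold pt; rw [if_pos hb, if_neg hne, if_pos h2]
lemma pt_bex (d m : ℕ) (hb : m < 3*(d/2)) (i : Fin d) (h2 : ¬ (i:ℕ) < 2*(d/2)) :
    pt d m i = 0 := by
  unfold pt; rw [if_pos hb, if_neg (by omega), if_neg h2]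
lemma pt_Xb (d m : ℕ) (hb : ¬ m < 3*(d/2)) (i : Fin d) (h2 : (i:ℕ) < 2*(d/2)) :
    pt d m i = 2 := by
  unfold pt; rw [if_neg hb, if_pos h2]
lemma pt_Xp (d m : ℕ) (hb : ¬ m < 3*(d/2)) (i : Fin d) (h2 : ¬ (i:ℕ) < 2*(d/2))
    (hm : m = 3*(d/2)) : pt d m i = 100 := by
  unfold pt; rw [if_neg hb, if_neg h2, if_pos hm]
lemma pt_Xm (d m : ℕ) (hb : ¬ m < 3*(d/2)) (i : Fin d) (h2 : ¬ (i:ℕ) < 2*(d/2))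
    (hm : m ≠ 3*(d/2)) : pt d m i = -100 := by
  unfold pt; rw [if_neg hb, if_neg h2, if_neg hm]

-- unfolding lemmas for ctr
lemma ctr_c1 (d : ℕ) (E : ℕ → Prop) (i : Fin d) (h2 : (i:ℕ) < 2*(d/2)) (he : (i:ℕ) % 2 = 0) :
    ctr d E i = cc1 (Rad d E) (E (3 * ((i:ℕ)/2))) (E (3 * ((i:ℕ)/2) + 1)) (E (3 * ((i:ℕ)/2) + 2)) := by
  unfold ctr; rw [if_pos h2, if_pos he]
lemma ctr_c2 (d : ℕ) (E : ℕ → Prop) (i : Fin d) (h2 : (i:ℕ) < 2*(d/2)) (he : ¬ (i:ℕ) % 2 = 0) :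
    ctr d E i = cc2 (Rad d E) (E (3 * ((i:ℕ)/2))) (E (3 * ((i:ℕ)/2) + 1)) (E (3 * ((i:ℕ)/2) + 2)) := by
  unfold ctr; rw [if_pos h2, if_neg he]
lemma ctr_ex (d : ℕ) (E : ℕ → Prop) (i : Fin d) (h2 : ¬ (i:ℕ) < 2*(d/2)) :
    ctr d E i = ccx (Rad d E) (E (3 * (d / 2))) (E (3 * (d / 2) + 1)) := by
  unfold ctr; rw [if_neg h2]

lemma main_iff (d : ℕ) (E : ℕ → Prop) (m : ℕ) (hm : m < np d) :
    (∀ i, |pt d m i - ctr d E i| ≤ Rad d E) ↔ ¬ E m := by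
  have hR := Rad_ge d E
  unfold np at hm
  constructor
  · intro h hEm
    by_cases hb : m < 3 * (d / 2)
    · -- block point
      obtain ⟨b, j, hj3, rfl⟩ : ∃ b j, j < 3 ∧ m = 3*b+j := ⟨m/3, m%3, by omega, by omega⟩
      have hlt1 : 2*b < d := by omega
      have hlt2 : 2*b+1 < d := by omega
      have h1 := h ⟨2*b, hlt1⟩
      have h2 := h ⟨2*b+1, hlt2⟩
      have hval1 : ((⟨2*b, hlt1⟩ : Fin d) : ℕ) = 2*b := rfl
      have hval2 : ((⟨2*b+1, hlt2⟩ : Fin d) : ℕ) = 2*b+1 := rfl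
      rw [pt_own1 d _ hb _ (by omega), ctr_c1 d E _ (by omega) (by omega), hval1] at h1
      rw [pt_own2 d _ hb _ (by omega), ctr_c2 d E _ (by omega) (by omega), hval2] at h2
      have e1 : (2*b)/2 = b := by omega
      have e2 : (2*b+1)/2 = b := by omega
      have e3 : (3*b+j) % 3 = j := by omega
      rw [e1, e3] at h1
      rw [e2, e3] at h2
      interval_cases j
      · have hA : E (3*b) := by rwa [Nat.add_zero] at hEm
        rw [show bv1 0 = 8 from rfl] at h1
        rw [show bv2 0 = 4 from rfl] at h2
        exact exclA hR hA h1 h2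
      · exact exclB hR hEm (by rwa [show bv1 1 = 4 from rfl] at h1)
          (by rwa [show bv2 1 = 0 from rfl] at h2)
      · exact exclC hR hEm (by rwa [show bv1 2 = 0 from rfl] at h1)
          (by rwa [show bv2 2 = 8 from rfl] at h2)
    · -- X point
      have hd1 : d % 2 = 1 := by omega
      have hlt0 : 2*(d/2) < d := by omega
      have h0 := h ⟨2*(d/2), hlt0⟩
      have hq : ¬ (((⟨2*(d/2), hlt0⟩ : Fin d) : ℕ) < 2*(d/2)) := by
        rw [show ((⟨2*(d/2), hlt0⟩ : Fin d) : ℕ) = 2*(d/2) from rfl]; omega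
      rw [ctr_ex d E _ hq] at h0
      by_cases hm0 : m = 3*(d/2)
      · rw [pt_Xp d m hb _ hq hm0] at h0
        rw [hm0] at hEm
        unfold ccx at h0
        rw [if_pos hEm, abs_le] at h0
        linarith [h0.1, h0.2]
      · have hm1 : m = 3*(d/2)+1 := by omega
        rw [pt_Xm d m hb _ hq hm0] at h0
        rw [hm1] at hEm
        unfold ccx at h0
        by_cases hk : E (3*(d/2))
        · have hrad : Rad d E = 10 := by unfold Rad; rw [if_pos ⟨hd1, hk, hEm⟩]
          rw [if_pos hk, hrad, abs_le] at h0
          linarith [h0.1, h0.2]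
        · have hrad : Rad d E = 1000 := by unfold Rad; rw [if_neg (by tauto)]
          rw [if_neg hk, if_pos hEm, hrad, abs_le] at h0
          linarith [h0.1, h0.2]
  · intro hEm i
    by_cases h2 : (i:ℕ) < 2*(d/2)
    · by_cases hb : m < 3 * (d / 2)
      · by_cases hown : (i:ℕ)/2 = m/3
        · obtain ⟨b, j, hj3, rfl⟩ : ∃ b j, j < 3 ∧ m = 3*b+j := ⟨m/3, m%3, by omega, by omega⟩
          have hib : (i:ℕ)/2 = b := by omega
          have e3 : (3*b+j) % 3 = j := by omega
          by_cases he : (i:ℕ) % 2 = 0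
          · rw [pt_own1 d _ hb i (by omega), ctr_c1 d E i h2 he, hib, e3]
            interval_cases j
            · exact (keptA hR (by rwa [Nat.add_zero] at hEm)).1
            · exact (keptB hR hEm).1
            · exact (keptC hR hEm).1
          · rw [pt_own2 d _ hb i (by omega), ctr_c2 d E i h2 he, hib, e3]
            interval_cases j
            · exact (keptA hR (by rwa [Nat.add_zero] at hEm)).2
            · exact (keptB hR hEm).2
            · exact (keptC hR hEm).2
        · rw [pt_forb d m hb i hown h2]
          by_cases he : (i:ℕ) % 2 = 0
          · rw [ctr_c1 d E i h2 he]; exact foreign1 hR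
          · rw [ctr_c2 d E i h2 he]; exact foreign2 hR
      · rw [pt_Xb d m hb i h2]
        by_cases he : (i:ℕ) % 2 = 0
        · rw [ctr_c1 d E i h2 he]; exact foreign1 hR
        · rw [ctr_c2 d E i h2 he]; exact foreign2 hR
    · rw [ctr_ex d E i h2]
      by_cases hb : m < 3 * (d / 2)
      · rw [pt_bex d m hb i h2]; exact keptx0 hR
      · have hd1 : d % 2 = 1 := by omega
        by_cases hm0 : m = 3*(d/2)
        · rw [pt_Xp d m hb i h2 hm0]
          rw [hm0] at hEm
          have hrad : Rad d E = 1000 := by unfold Rad; rw [if_neg (by tauto)]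
          unfold ccx
          rw [if_neg hEm, hrad]
          split_ifs <;> rw [abs_le] <;> constructor <;> linarith
        · have hm1 : m = 3*(d/2)+1 := by omega
          rw [pt_Xm d m hb i h2 hm0]
          rw [hm1] at hEm
          have hrad : Rad d E = 1000 := by unfold Rad; rw [if_neg (by tauto)]
          unfold ccx
          rw [hrad]
          split_ifs <;> rw [abs_le] <;> constructor <;> linarith



lemma bv1_ne2 (j : ℕ) : bv1 j ≠ 2 := by
  unfold bv1; split_ifs <;> norm_num

lemma pt_inj (d : ℕ) : ∀ m, m < np d → ∀ m', m' < np d → pt d m = pt d m' → m = m' := by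
  intro m hm m' hm' hpt
  by_contra hne
  unfold np at hm hm'
  by_cases hb : m < 3 * (d/2)
  · have hlt : 2*(m/3) < d := by omega
    set i : Fin d := ⟨2*(m/3), hlt⟩ with hi
    have hvi : (i:ℕ) = 2*(m/3) := rfl
    have h1 : pt d m i = bv1 (m % 3) := pt_own1 d m hb i (by omega)
    by_cases hb' : m' < 3 * (d/2)
    · by_cases hq : m/3 = m'/3
      · have h2 : pt d m' i = bv1 (m' % 3) := pt_own1 d m' hb' i (by omega)
        have heq : bv1 (m % 3) = bv1 (m' % 3) := by rw [← h1, ← h2, hpt]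
        have hjj : m % 3 ≠ m' % 3 := by omega
        unfold bv1 at heq
        split_ifs at heq <;> first | omega | norm_num at heq
      · have h2 : pt d m' i = 2 := pt_forb d m' hb' i (by omega) (by omega)
        have heq : bv1 (m % 3) = 2 := by rw [← h1, ← h2, hpt]
        exact bv1_ne2 _ heq
    · have h2 : pt d m' i = 2 := pt_Xb d m' hb' i (by omega)
      have heq : bv1 (m % 3) = 2 := by rw [← h1, ← h2, hpt]
      exact bv1_ne2 _ heq
  · by_cases hb' : m' < 3 * (d/2)
    · have hlt : 2*(m'/3) < d := by omega
      set i : Fin d := ⟨2*(m'/3), hlt⟩ with hi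
      have hvi : (i:ℕ) = 2*(m'/3) := rfl
      have h1 : pt d m' i = bv1 (m' % 3) := pt_own1 d m' hb' i (by omega)
      have h2 : pt d m i = 2 := pt_Xb d m hb i (by omega)
      have heq : bv1 (m' % 3) = 2 := by rw [← h1, ← h2, ← hpt]
      exact bv1_ne2 _ heq
    · have hd1 : d % 2 = 1 := by omega
      have hlt : 2*(d/2) < d := by omega
      set i : Fin d := ⟨2*(d/2), hlt⟩ with hi
      have hvi : (i:ℕ) = 2*(d/2) := rfl
      have hq : ¬ ((i:ℕ) < 2*(d/2)) := by rw [show (i:ℕ) = 2*(d/2) from rfl]; omega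
      by_cases hm0 : m = 3*(d/2)
      · have hm1 : m' ≠ 3*(d/2) := by omega
        have h1 : pt d m i = 100 := pt_Xp d m hb i hq hm0
        have h2 : pt d m' i = -100 := pt_Xm d m' hb' i hq hm1
        rw [hpt, h2] at h1; norm_num at h1
      · have hm1 : m' = 3*(d/2) := by omega
        have h1 : pt d m i = -100 := pt_Xm d m hb i hq hm0
        have h2 : pt d m' i = 100 := pt_Xp d m' hb' i hq hm1
        rw [hpt, h2] at h1; norm_num at h1

def sig (d : ℕ) : Finset (Fin d → ℝ) := (Finset.range (np d)).image (pt d)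

lemma sig_card (d : ℕ) : (sig d).card = np d := by
  rw [sig, Finset.card_image_of_injOn, Finset.card_range]
  intro m hm m' hm' h
  exact pt_inj d m (Finset.mem_range.mp hm) m' (Finset.mem_range.mp hm') h

lemma sig_shatters (d : ℕ) : Shatters (Cd d) ↑(sig d) := by
  intro T hT
  set E : ℕ → Prop := fun m => pt d m ∉ T with hE
  have hr0 : (0:ℝ) ≤ Rad d E := by linarith [Rad_ge d E]
  refine ⟨Metric.closedBall (ctr d E) (Rad d E), ⟨ctr d E, Rad d E, hr0, rfl⟩, ?_⟩
  ext x
  constructor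
  · rintro ⟨hxB, hxσ⟩
    obtain ⟨m, hm, rfl⟩ : ∃ m, m < np d ∧ pt d m = x := by
      have := hxσ
      simp only [sig, Finset.coe_image, Finset.coe_range, Set.mem_image, Set.mem_Iio] at this
      obtain ⟨m, hm, hx⟩ := this
      exact ⟨m, hm, hx⟩
    have hnE : ¬ E m := (main_iff d E m hm).mp ((mem_cball_pi _ _ hr0).mp hxB)
    simpa [hE] using hnE
  · intro hxT
    have hxσ : x ∈ (↑(sig d) : Set (Fin d → ℝ)) := hT hxT
    obtain ⟨m, hm, rfl⟩ : ∃ m, m < np d ∧ pt d m = x := by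
      simp only [sig, Finset.coe_image, Finset.coe_range, Set.mem_image, Set.mem_Iio] at hxσ
      obtain ⟨m, hm, hx⟩ := hxσ
      exact ⟨m, hm, hx⟩
    have hnE : ¬ E m := by simp [hE]; exact hxT
    exact ⟨(mem_cball_pi _ _ hr0).mpr ((main_iff d E m hm).mpr hnE), hT hxT⟩

variable {d : ℕ}

def ownU (σ : Finset (Fin d → ℝ)) (p : Fin d → ℝ) (i : Fin d) : Prop :=
  ∀ q ∈ σ, q ≠ p → q i < p i
def ownD (σ : Finset (Fin d → ℝ)) (p : Fin d → ℝ) (i : Fin d) : Prop :=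
  ∀ q ∈ σ, q ≠ p → p i < q i
def own (σ : Finset (Fin d → ℝ)) (p : Fin d → ℝ) (ds : Fin d × Bool) : Prop :=
  cond ds.2 (ownU σ p ds.1) (ownD σ p ds.1)

def phi (σ : Finset (Fin d → ℝ)) (p : Fin d → ℝ) : Finset (Fin d × Bool) :=
  Finset.univ.filter (own σ p)

lemma mem_phi {σ : Finset (Fin d → ℝ)} {p : Fin d → ℝ} {ds : Fin d × Bool} :
    ds ∈ phi σ p ↔ own σ p ds := by simp [phi]

lemma realize {σ : Finset (Fin d → ℝ)} (hshat : Shatters (Cd d) ↑σ)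
    {T : Set (Fin d → ℝ)} (hT : T ⊆ ↑σ) :
    ∃ c : Fin d → ℝ, ∃ r : ℝ, 0 ≤ r ∧
      (∀ p ∈ σ, p ∈ T → ∀ i, |p i - c i| ≤ r) ∧
      (∀ p ∈ σ, p ∉ T → ∃ i, r < |p i - c i|) := by
  obtain ⟨C, ⟨c, r, hr, rfl⟩, hC⟩ := hshat T hT
  refine ⟨c, r, hr, ?_, ?_⟩
  · intro p hp hpT
    have : p ∈ Metric.closedBall c r := by
      have : p ∈ Metric.closedBall c r ∩ ↑σ := hC ▸ hpT
      exact this.1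
    exact (mem_cball_pi c p hr).mp this
  · intro p hp hpT
    have hpC : p ∉ Metric.closedBall c r := by
      intro h
      exact hpT (by rw [← hC]; exact ⟨h, hp⟩)
    have := (mem_cball_pi c p hr).not.mp hpC
    push_neg at this
    exact this

lemma phi_nonempty {σ : Finset (Fin d → ℝ)} (hshat : Shatters (Cd d) ↑σ)
    {p : Fin d → ℝ} (hp : p ∈ σ) : (phi σ p).Nonempty := by
  obtain ⟨c, r, hr, hin, hout⟩ := realize hshat (T := ↑σ \ {p}) Set.diff_subset
  obtain ⟨i, hi⟩ := hout p hp (by simp)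
  have hkept : ∀ q ∈ σ, q ≠ p → |q i - c i| ≤ r := by
    intro q hq hqp
    exact hin q hq ⟨hq, by simpa using hqp⟩ i
  rcases lt_abs.mp hi with h | h
  · refine ⟨(i, true), mem_phi.mpr ?_⟩
    intro q hq hqp
    have := (abs_le.mp (hkept q hq hqp)).2
    simpa using by linarith
  · refine ⟨(i, false), mem_phi.mpr ?_⟩
    intro q hq hqp
    have := (abs_le.mp (hkept q hq hqp)).1
    simpa using by linarith

lemma own_unique {σ : Finset (Fin d → ℝ)} {p q : Fin d → ℝ} {ds : Fin d × Bool}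
    (hp : p ∈ σ) (hq : q ∈ σ) (hne : p ≠ q)
    (h1 : own σ p ds) (h2 : own σ q ds) : False := by
  rcases ds with ⟨i, b⟩
  cases b
  · have a1 : p i < q i := (h1 : ownD σ p i) q hq hne.symm
    have a2 : q i < p i := (h2 : ownD σ q i) p hp hne
    linarith
  · have a1 : q i < p i := (h1 : ownU σ p i) q hq hne.symm
    have a2 : p i < q i := (h2 : ownU σ q i) p hp hne
    linarith

lemma phi_disjoint {σ : Finset (Fin d → ℝ)} {p q : Fin d → ℝ}
    (hp : p ∈ σ) (hq : q ∈ σ) (hne : p ≠ q) : Disjoint (phi σ p) (phi σ q) := by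
  rw [Finset.disjoint_left]
  intro ds h1 h2
  exact own_unique hp hq hne (mem_phi.mp h1) (mem_phi.mp h2)

lemma pairlemma {σ : Finset (Fin d → ℝ)}
    (hgen : ∀ i : Fin d, Set.InjOn (fun p : Fin d → ℝ => p i) ↑σ)
    (hshat : Shatters (Cd d) ↑σ) {p q s : Fin d → ℝ} {i : Fin d}
    (hp : p ∈ σ) (hq : q ∈ σ) (hs : s ∈ σ) (hsp : s ≠ p) (hsq : s ≠ q)
    (hφp : phi σ p = {(i, true)}) (hφq : phi σ q = {(i, false)}) :
    ∀ x ∈ σ, x ≠ p → x ≠ q → ∀ y ∈ σ, y ≠ p → y ≠ q → ∀ m, x m - y m < p i - q i := by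
  have hpq : p ≠ q := by
    intro h
    rw [h, hφq] at hφp
    have : (i, false) = (i, true) := by
      have := hφp ▸ (Finset.mem_singleton_self (i, false))
      simpa using this
    simp at this
  have ownp : own σ p (i, true) := mem_phi.mp (hφp ▸ Finset.mem_singleton_self _)
  have ownq : own σ q (i, false) := mem_phi.mp (hφq ▸ Finset.mem_singleton_self _)
  obtain ⟨c, r, hr, hin, hout⟩ := realize hshat (T := ↑σ \ {p, q}) Set.diff_subset
  have hkept : ∀ x ∈ σ, x ≠ p → x ≠ q → ∀ m, |x m - c m| ≤ r := by
    intro x hx hxp hxq m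
    exact hin x hx ⟨hx, by simp [hxp, hxq]⟩ m
  -- p is violated exactly at i from above
  have Hp : r < p i - c i := by
    obtain ⟨m, hm⟩ := hout p hp (by simp)
    rcases lt_abs.mp hm with h | h
    · -- upper violation at m ; claim m = i
      have hm_i : m = i := by
        by_contra hmi
        have hqp : q m ≠ p m := fun hh => hpq (hgen m hq hp hh).symm
        rcases lt_or_gt_of_ne hqp with hlt | hgt
        · have : own σ p (m, true) := by
            show ownU σ p m
            intro x hx hxp
            by_cases hxq : x = q
            · rw [hxq]; exact hlt
            · have := (abs_le.mp (hkept x hx hxp hxq m)).2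
              linarith
          have := hφp ▸ mem_phi.mpr this
          simp at this
          exact hmi this
        · have : own σ q (m, true) := by
            show ownU σ q m
            intro x hx hxq
            by_cases hxp : x = p
            · rw [hxp]; exact hgt
            · have := (abs_le.mp (hkept x hx hxp hxq m)).2
              linarith
          have := hφq ▸ mem_phi.mpr this
          simp at this
      rw [hm_i] at h; linarith
    · -- lower violation at m : impossible
      exfalso
      have hqp : q m ≠ p m := fun hh => hpq (hgen m hq hp hh).symm
      rcases lt_or_gt_of_ne hqp with hlt | hgt
      · have : own σ q (m, false) := by
          show ownD σ q m
          intro x hx hxq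
          by_cases hxp : x = p
          · rw [hxp]; linarith
          · have := (abs_le.mp (hkept x hx hxp hxq m)).1
            linarith
        have hmf := hφq ▸ mem_phi.mpr this
        simp at hmf
        -- m = i ; then p i < c i - r ≤ s i but s i < p i since p owns (i,true)
        have hsi : s i < p i := (ownp : ownU σ p i) s hs hsp
        have := (abs_le.mp (hkept s hs hsp hsq i)).1
        rw [hmf] at h
        linarith
      · have : own σ p (m, false) := by
          show ownD σ p m
          intro x hx hxp
          by_cases hxq : x = q
          · rw [hxq]; exact hgt
          · have := (abs_le.mp (hkept x hx hxp hxq m)).1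
            linarith
        have := hφp ▸ mem_phi.mpr this
        simp at this
  -- q is violated exactly at i from below
  have Hq : r < c i - q i := by
    obtain ⟨m, hm⟩ := hout q hq (by simp)
    rcases lt_abs.mp hm with h | h
    · -- upper violation for q : impossible or gives contradiction
      exfalso
      have hqp : q m ≠ p m := fun hh => hpq (hgen m hq hp hh).symm
      rcases lt_or_gt_of_ne hqp with hlt | hgt
      · have : own σ p (m, true) := by
          show ownU σ p m
          intro x hx hxp
          by_cases hxq : x = q
          · rw [hxq]; exact hlt
          · have := (abs_le.mp (hkept x hx hxp hxq m)).2
            linarith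
        have hmf := hφp ▸ mem_phi.mpr this
        simp at hmf
        -- m = i: q i > c i + r ≥ s i ; but q owns (i,false): q i < s i
        have hsi : q i < s i := (ownq : ownD σ q i) s hs hsq
        have := (abs_le.mp (hkept s hs hsp hsq i)).2
        rw [hmf] at h
        linarith
      · have : own σ q (m, true) := by
          show ownU σ q m
          intro x hx hxq
          by_cases hxp : x = p
          · rw [hxp]; exact hgt
          · have := (abs_le.mp (hkept x hx hxp hxq m)).2
            linarith
        have := hφq ▸ mem_phi.mpr this
        simp at this
    · have hm_i : m = i := by
        by_contra hmi
        have hqp : q m ≠ p m := fun hh => hpq (hgen m hq hp hh).symm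
        rcases lt_or_gt_of_ne hqp with hlt | hgt
        · have : own σ q (m, false) := by
            show ownD σ q m
            intro x hx hxq
            by_cases hxp : x = p
            · rw [hxp]; linarith
            · have := (abs_le.mp (hkept x hx hxp hxq m)).1
              linarith
          have hmf := hφq ▸ mem_phi.mpr this
          simp at hmf
          exact hmi hmf
        · have : own σ p (m, false) := by
            show ownD σ p m
            intro x hx hxp
            by_cases hxq : x = q
            · rw [hxq]; exact hgt
            · have := (abs_le.mp (hkept x hx hxp hxq m)).1
              linarith
          have := hφp ▸ mem_phi.mpr this
          simp at this
      rw [hm_i] at h; linarith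
  intro x hx hxp hxq y hy hyp hyq m
  have h1 := (abs_le.mp (hkept x hx hxp hxq m)).2
  have h2 := (abs_le.mp (hkept y hy hyp hyq m)).1
  linarith



lemma ne_of_phi {σ : Finset (Fin d → ℝ)} {a b : Fin d → ℝ} {d1 d2 : Fin d × Bool}
    (h1 : phi σ a = {d1}) (h2 : phi σ b = {d2}) (hne : d1 ≠ d2) : a ≠ b := by
  intro h
  rw [h, h2] at h1
  exact hne (Finset.singleton_injective h1.symm)

lemma phi_singleton_of_card_one {σ : Finset (Fin d → ℝ)} {p : Fin d → ℝ}
    (h : (phi σ p).card = 1) : ∃ a, phi σ p = {a} := Finset.card_eq_one.mp h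

lemma two_doubled {σ : Finset (Fin d → ℝ)}
    (hgen : ∀ i : Fin d, Set.InjOn (fun p : Fin d → ℝ => p i) ↑σ)
    (hshat : Shatters (Cd d) ↑σ) {p1 q1 s1 t1 : Fin d → ℝ} {i j : Fin d} (hij : i ≠ j)
    (hp1 : p1 ∈ σ) (hq1 : q1 ∈ σ) (hs1 : s1 ∈ σ) (ht1 : t1 ∈ σ)
    (hP : phi σ p1 = {(i, true)}) (hQ : phi σ q1 = {(i, false)})
    (hS : phi σ s1 = {(j, true)}) (hT : phi σ t1 = {(j, false)}) : False := by
  have hsp : s1 ≠ p1 := ne_of_phi hS hP (by simp [hij.symm])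
  have hsq : s1 ≠ q1 := ne_of_phi hS hQ (by simp [hij.symm])
  have htp : t1 ≠ p1 := ne_of_phi hT hP (by simp [hij.symm])
  have htq : t1 ≠ q1 := ne_of_phi hT hQ (by simp [hij.symm])
  have hps : p1 ≠ s1 := hsp.symm
  have hpt : p1 ≠ t1 := htp.symm
  have hqs : q1 ≠ s1 := hsq.symm
  have hqt : q1 ≠ t1 := htq.symm
  have H1 := pairlemma hgen hshat hp1 hq1 hs1 hsp hsq hP hQ s1 hs1 hsp hsq t1 ht1 htp htq j
  have H2 := pairlemma hgen hshat hs1 ht1 hp1 hps hpt hS hT p1 hp1 hps hpt q1 hq1 hqs hqt i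
  linarith

lemma upper_generic (hd : 1 ≤ d) (σ : Finset (Fin d → ℝ))
    (hgen : ∀ i : Fin d, Set.InjOn (fun p : Fin d → ℝ => p i) ↑σ)
    (hshat : Shatters (Cd d) ↑σ) : 2 * σ.card ≤ 3 * d + 1 := by
  have hdisj : ∀ p ∈ σ, ∀ q ∈ σ, p ≠ q → Disjoint (phi σ p) (phi σ q) :=
    fun p hp q hq hne => phi_disjoint hp hq hne
  have htotal : ∑ p ∈ σ, (phi σ p).card ≤ 2 * d := by
    rw [← Finset.card_biUnion hdisj]
    calc (σ.biUnion (phi σ)).card ≤ (Finset.univ : Finset (Fin d × Bool)).card :=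
          Finset.card_le_univ _
      _ = 2 * d := by simp [Finset.card_univ, mul_comm]
  set Q := σ.filter (fun p => (phi σ p).card = 1) with hQdef
  set g : (Fin d → ℝ) → Fin d := fun p =>
    if h : ((phi σ p).image Prod.fst).Nonempty then ((phi σ p).image Prod.fst).min' h
    else ⟨0, hd⟩ with hgdef
  have hgQ : ∀ p ∈ Q, ∃ b, phi σ p = {(g p, b)} := by
    intro p hp
    obtain ⟨a, ha⟩ := Finset.card_eq_one.mp (Finset.mem_filter.mp hp).2
    refine ⟨a.2, ?_⟩
    have himg : (phi σ p).image Prod.fst = {a.1} := by rw [ha]; simp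
    have hga : g p = a.1 := by
      rw [hgdef]
      simp only
      rw [dif_pos (by rw [himg]; exact ⟨a.1, Finset.mem_singleton_self _⟩)]
      simp [himg]
    rw [hga, ha]
  have hQσ : ∀ p ∈ Q, p ∈ σ := fun p hp => (Finset.mem_filter.mp hp).1
  have fiber2 : ∀ p ∈ Q, ∀ q ∈ Q, ∀ u ∈ Q, p ≠ q → p ≠ u → q ≠ u →
      g p = g q → g p = g u → False := by
    intro p hp q hq u hu hpq hpu hqu e1 e2
    obtain ⟨bp, hbp⟩ := hgQ p hp
    obtain ⟨bq, hbq⟩ := hgQ q hq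
    obtain ⟨bu, hbu⟩ := hgQ u hu
    rw [← e1] at hbq
    rw [← e2] at hbu
    have hownp : own σ p (g p, bp) := mem_phi.mp (hbp ▸ Finset.mem_singleton_self _)
    have hownq : own σ q (g p, bq) := mem_phi.mp (hbq ▸ Finset.mem_singleton_self _)
    have hownu : own σ u (g p, bu) := mem_phi.mp (hbu ▸ Finset.mem_singleton_self _)
    cases bp <;> cases bq <;> cases bu
    all_goals first
      | exact own_unique (hQσ p hp) (hQσ q hq) hpq hownp hownq
      | exact own_unique (hQσ p hp) (hQσ u hu) hpu hownp hownu
      | exact own_unique (hQσ q hq) (hQσ u hu) hqu hownq hownu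
  have hQcard : Q.card ≤ d + 1 := by
    by_contra hh
    push_neg at hh
    have hh' : (Finset.univ : Finset (Fin d)).card < Q.card := by
      have : (Finset.univ : Finset (Fin d)).card = d := by simp
      omega
    obtain ⟨p, hpQ, q, hqQ, hpq, hgpq⟩ :=
      Finset.exists_ne_map_eq_of_card_lt_of_maps_to hh' (fun a _ => Finset.mem_univ (g a))
    obtain ⟨bp, hbp⟩ := hgQ p hpQ
    obtain ⟨bq, hbq⟩ := hgQ q hqQ
    rw [← hgpq] at hbq
    have hbne : bp ≠ bq := by
      intro h
      rw [h] at hbp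
      exact own_unique (hQσ p hpQ) (hQσ q hqQ) hpq
        (mem_phi.mp (hbp ▸ Finset.mem_singleton_self _))
        (mem_phi.mp (hbq ▸ Finset.mem_singleton_self _))
    -- second pigeonhole on Q minus p,q
    set Q' := (Q.erase p).erase q with hQ'def
    have hQ'card : (Finset.univ.erase (g p) : Finset (Fin d)).card < Q'.card := by
      have h1 : Q'.card ≥ Q.card - 2 := by
        rw [hQ'def]
        have := Finset.pred_card_le_card_erase (s := Q) (a := p)
        have := Finset.pred_card_le_card_erase (s := Q.erase p) (a := q)
        omega
      have h2 : (Finset.univ.erase (g p) : Finset (Fin d)).card = d - 1 := by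
        rw [Finset.card_erase_of_mem (Finset.mem_univ _)]
        simp
      omega
    have hmaps : ∀ a ∈ Q', g a ∈ Finset.univ.erase (g p) := by
      intro a ha
      rw [Finset.mem_erase]
      refine ⟨?_, Finset.mem_univ _⟩
      intro hga
      have haQ : a ∈ Q := Finset.mem_of_mem_erase (Finset.mem_of_mem_erase ha)
      have hanep : a ≠ p := Finset.ne_of_mem_erase (Finset.mem_of_mem_erase ha)
      have haneq : a ≠ q := Finset.ne_of_mem_erase ha
      exact fiber2 p hpQ q hqQ a haQ hpq hanep.symm haneq.symm hgpq hga.symm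
    obtain ⟨s, hsQ', t, htQ', hst, hgst⟩ :=
      Finset.exists_ne_map_eq_of_card_lt_of_maps_to hQ'card hmaps
    have hsQ : s ∈ Q := Finset.mem_of_mem_erase (Finset.mem_of_mem_erase hsQ')
    have htQ : t ∈ Q := Finset.mem_of_mem_erase (Finset.mem_of_mem_erase htQ')
    obtain ⟨bs, hbs⟩ := hgQ s hsQ
    obtain ⟨bt, hbt⟩ := hgQ t htQ
    rw [← hgst] at hbt
    have hbne2 : bs ≠ bt := by
      intro h
      rw [h] at hbs
      exact own_unique (hQσ s hsQ) (hQσ t htQ) hst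
        (mem_phi.mp (hbs ▸ Finset.mem_singleton_self _))
        (mem_phi.mp (hbt ▸ Finset.mem_singleton_self _))
    have hji : g s ≠ g p := ((Finset.mem_erase.mp (hmaps s hsQ')).1)
    have hij : g p ≠ g s := hji.symm
    cases bp <;> cases bq <;> cases bs <;> cases bt <;>
      first
      | exact absurd rfl hbne
      | exact absurd rfl hbne2
      | exact two_doubled hgen hshat hij (hQσ q hqQ) (hQσ p hpQ) (hQσ t htQ) (hQσ s hsQ) hbq hbp hbt hbs
      | exact two_doubled hgen hshat hij (hQσ q hqQ) (hQσ p hpQ) (hQσ s hsQ) (hQσ t htQ) hbq hbp hbs hbt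
      | exact two_doubled hgen hshat hij (hQσ p hpQ) (hQσ q hqQ) (hQσ t htQ) (hQσ s hsQ) hbp hbq hbt hbs
      | exact two_doubled hgen hshat hij (hQσ p hpQ) (hQσ q hqQ) (hQσ s hsQ) (hQσ t htQ) hbp hbq hbs hbt
  -- counting
  have hsum1 : ∑ p ∈ Q, (phi σ p).card = Q.card := by
    rw [Finset.sum_congr rfl (fun p hp => (Finset.mem_filter.mp hp).2)]
    simp
    rfl
  have hsum2 : 2 * (σ.filter (fun p => ¬ (phi σ p).card = 1)).card ≤
      ∑ p ∈ σ.filter (fun p => ¬ (phi σ p).card = 1), (phi σ p).card := by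
    rw [two_mul]
    calc _ = (σ.filter (fun p => ¬ (phi σ p).card = 1)).card • 2 := by
          rw [smul_eq_mul]; ring
      _ ≤ _ := Finset.card_nsmul_le_sum _ _ _ (by
          intro x hx
          have hx1 := Finset.mem_filter.mp hx
          have hne : (phi σ x).Nonempty := phi_nonempty hshat hx1.1
          have := Finset.card_pos.mpr hne
          omega)
  have hsplit : ∑ p ∈ Q, (phi σ p).card
      + ∑ p ∈ σ.filter (fun p => ¬ (phi σ p).card = 1), (phi σ p).card
      = ∑ p ∈ σ, (phi σ p).card := Finset.sum_filter_add_sum_filter_not σ _ _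
  have hcards : Q.card + (σ.filter (fun p => ¬ (phi σ p).card = 1)).card = σ.card :=
    Finset.card_filter_add_card_filter_not _
  omega



lemma robust {σ : Finset (Fin d → ℝ)} (hshat : Shatters (Cd d) ↑σ)
    (t : Finset (Fin d → ℝ)) (ht : t ⊆ σ) :
    ∃ ε > (0:ℝ), ∀ f : (Fin d → ℝ) → (Fin d → ℝ),
      (∀ p ∈ σ, dist (f p) p ≤ ε) → ∃ C ∈ Cd d, ∀ p ∈ σ, (f p ∈ C ↔ p ∈ t) := by
  obtain ⟨C, ⟨c, r, hr, rfl⟩, hC⟩ := hshat ↑t (by exact_mod_cast ht)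
  have hin : ∀ p ∈ t, dist p c ≤ r := by
    intro p hp
    have : p ∈ Metric.closedBall c r ∩ ↑σ := by rw [hC]; exact_mod_cast hp
    exact this.1
  have hout : ∀ p ∈ σ, p ∉ t → r < dist p c := by
    intro p hp hpt
    by_contra hcon
    push_neg at hcon
    have : p ∈ Metric.closedBall c r ∩ ↑σ := ⟨hcon, by exact_mod_cast hp⟩
    rw [hC] at this
    exact hpt (by exact_mod_cast this)
  by_cases hne : (σ \ t).Nonempty
  · obtain ⟨p0, hp0, hmin⟩ := Finset.exists_min_image (σ \ t) (fun p => dist p c) hne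
    have hp0' := Finset.mem_sdiff.mp hp0
    have hm : r < dist p0 c := hout p0 hp0'.1 hp0'.2
    set ε := (dist p0 c - r) / 4 with hε
    have hεpos : 0 < ε := by rw [hε]; linarith
    refine ⟨ε, hεpos, ?_⟩
    intro f hf
    refine ⟨Metric.closedBall c (r + 2*ε), ⟨c, r + 2*ε, by linarith, rfl⟩, ?_⟩
    intro p hp
    constructor
    · intro hfp
      by_contra hpt
      have h1 : dist p0 c ≤ dist p c := hmin p (Finset.mem_sdiff.mpr ⟨hp, hpt⟩)
      have h2 : dist p c ≤ dist p (f p) + dist (f p) c := dist_triangle _ _ _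
      have h3 : dist (f p) c ≤ r + 2*ε := Metric.mem_closedBall.mp hfp
      have h4 : dist p (f p) ≤ ε := by rw [dist_comm]; exact hf p hp
      rw [hε] at *
      linarith
    · intro hpt
      have h1 : dist p c ≤ r := hin p hpt
      have h2 : dist (f p) c ≤ dist (f p) p + dist p c := dist_triangle _ _ _
      have h4 : dist (f p) p ≤ ε := hf p hp
      exact Metric.mem_closedBall.mpr (by linarith)
  · -- t = σ
    refine ⟨1, one_pos, ?_⟩
    intro f hf
    refine ⟨Metric.closedBall c (r + 2), ⟨c, r + 2, by linarith, rfl⟩, ?_⟩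
    intro p hp
    have hpt : p ∈ t := by
      by_contra hcon
      exact hne ⟨p, Finset.mem_sdiff.mpr ⟨hp, hcon⟩⟩
    simp only [hpt, iff_true]
    have h1 : dist p c ≤ r := hin p hpt
    have h2 : dist (f p) c ≤ dist (f p) p + dist p c := dist_triangle _ _ _
    have h4 : dist (f p) p ≤ 1 := hf p hp
    exact Metric.mem_closedBall.mpr (by linarith)

set_option maxHeartbeats 2000000 in
lemma exists_generic (hd : 1 ≤ d) (σ : Finset (Fin d → ℝ)) (hshat : Shatters (Cd d) ↑σ) :
    ∃ σ' : Finset (Fin d → ℝ), σ'.card = σ.card ∧ Shatters (Cd d) ↑σ' ∧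
      (∀ i : Fin d, Set.InjOn (fun p : Fin d → ℝ => p i) ↑σ') := by
  classical
  -- the epsilon for each subset
  set ε' : Finset (Fin d → ℝ) → ℝ := fun t =>
    if h : t ⊆ σ then (robust hshat t h).choose else 1 with hε'def
  have hε'pos : ∀ t ∈ σ.powerset, 0 < ε' t := by
    intro t ht
    rw [hε'def]
    simp only
    rw [dif_pos (Finset.mem_powerset.mp ht)]
    exact (robust hshat t (Finset.mem_powerset.mp ht)).choose_spec.1
  have hε'spec : ∀ t ∈ σ.powerset, ∀ f : (Fin d → ℝ) → (Fin d → ℝ),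
      (∀ p ∈ σ, dist (f p) p ≤ ε' t) → ∃ C ∈ Cd d, ∀ p ∈ σ, (f p ∈ C ↔ p ∈ t) := by
    intro t ht
    have h := Finset.mem_powerset.mp ht
    have := (robust hshat t h).choose_spec.2
    rw [hε'def]
    simpa only [dif_pos h] using this
  obtain ⟨t0, ht0, hmin0⟩ := Finset.exists_min_image σ.powerset ε' ⟨∅, by simp⟩
  set εm := ε' t0 with hεm
  have hεmpos : 0 < εm := hε'pos t0 ht0
  -- the gap set
  set gaps : Finset ℝ :=
    (((σ ×ˢ σ).biUnion (fun pq =>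
        (Finset.univ.image (fun i : Fin d => |pq.1 i - pq.2 i|)))).filter (fun x => 0 < x))
    ∪ (((σ ×ˢ σ).image (fun pq => dist pq.1 pq.2)).filter (fun x => 0 < x))
    ∪ {εm} with hgaps
  obtain ⟨mv, hmv, hmvmin⟩ := Finset.exists_min_image gaps id
    ⟨εm, by rw [hgaps]; simp⟩
  have hmpos : 0 < mv := by
    rw [hgaps] at hmv
    simp only [Finset.mem_union, Finset.mem_filter, Finset.mem_singleton] at hmv
    rcases hmv with (h | h) | h
    · exact h.2
    · exact h.2
    · rw [h]; exact hεmpos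
  have hm_le_εm : mv ≤ εm := by
    have : εm ∈ gaps := by rw [hgaps]; simp
    simpa using hmvmin εm this
  set n := σ.card with hn
  set η := mv / (n + 1) with hη
  have hn1 : (0:ℝ) < (n:ℝ) + 1 := by positivity
  have hηpos : 0 < η := by
    rw [hη]; exact div_pos hmpos hn1
  have hnη : (n : ℝ) * η < mv := by
    rw [hη]
    calc (n:ℝ) * (mv / (n+1)) = (n * mv) / (n+1) := by ring
      _ < mv := by rw [div_lt_iff₀ hn1]; nlinarith
  -- the index function
  set ι : (Fin d → ℝ) → ℕ := fun p => if h : p ∈ σ then (σ.equivFin ⟨p, h⟩ : ℕ) else 0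
    with hιdef
  have hιlt : ∀ p ∈ σ, ι p < n := by
    intro p hp
    rw [hιdef]
    simp only [dif_pos hp]
    exact (σ.equivFin ⟨p, hp⟩).isLt
  have hιinj : ∀ p ∈ σ, ∀ q ∈ σ, ι p = ι q → p = q := by
    intro p hp q hq h
    rw [hιdef] at h
    simp only [dif_pos hp, dif_pos hq] at h
    have := σ.equivFin.injective (Fin.val_injective h)
    exact congrArg Subtype.val this
  set f : (Fin d → ℝ) → (Fin d → ℝ) := fun p => fun i => p i + (ι p) * η with hfdef
  have hdistf : ∀ p ∈ σ, dist (f p) p ≤ (n:ℝ) * η := by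
    intro p hp
    rw [dist_pi_le_iff (mul_nonneg (Nat.cast_nonneg n) hηpos.le)]
    intro i
    rw [Real.dist_eq, hfdef]
    simp only
    rw [show p i + (ι p) * η - p i = (ι p) * η by ring]
    rw [abs_of_nonneg (mul_nonneg (Nat.cast_nonneg _) hηpos.le)]
    have := hιlt p hp
    have : (ι p : ℝ) ≤ n := by exact_mod_cast le_of_lt this
    nlinarith
  -- pointwise injectivity
  have hgap1 : ∀ p ∈ σ, ∀ q ∈ σ, ∀ i, p i ≠ q i → mv ≤ |p i - q i| := by
    intro p hp q hq i hne
    have hmem : |p i - q i| ∈ gaps := by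
      rw [hgaps]
      simp only [Finset.mem_union, Finset.mem_filter]
      left; left
      constructor
      · rw [Finset.mem_biUnion]
        exact ⟨(p, q), Finset.mem_product.mpr ⟨hp, hq⟩, by simp⟩
      · exact abs_pos.mpr (sub_ne_zero.mpr hne)
    simpa using hmvmin _ hmem
  have hkey : ∀ p ∈ σ, ∀ q ∈ σ, ∀ i : Fin d, f p i = f q i → p = q := by
    intro p hp q hq i hfi
    by_contra hne
    rw [hfdef] at hfi
    simp only at hfi
    by_cases hpi : p i = q i
    · have : (ι p : ℝ) * η = (ι q : ℝ) * η := by rw [hpi] at hfi; linarith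
      have : (ι p : ℝ) = (ι q : ℝ) := mul_right_cancel₀ (ne_of_gt hηpos) this
      exact hne (hιinj p hp q hq (by exact_mod_cast this))
    · have h1 : mv ≤ |p i - q i| := hgap1 p hp q hq i hpi
      have h2 : p i - q i = (ι q : ℝ) * η - (ι p : ℝ) * η := by linarith
      have h3 : |p i - q i| ≤ (n:ℝ) * η := by
        rw [h2]
        rw [abs_le]
        have l1 : (ι p : ℝ) ≤ n := by exact_mod_cast le_of_lt (hιlt p hp)
        have l2 : (ι q : ℝ) ≤ n := by exact_mod_cast le_of_lt (hιlt q hq)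
        have l3 : (0:ℝ) ≤ (ι p : ℝ) := by positivity
        have l4 : (0:ℝ) ≤ (ι q : ℝ) := by positivity
        constructor <;> nlinarith
      linarith
  have hfinj : Set.InjOn f ↑σ := by
    intro p hp q hq h
    exact hkey p hp q hq ⟨0, hd⟩ (congrFun h _)
  refine ⟨σ.image f, Finset.card_image_of_injOn hfinj, ?_, ?_⟩
  · -- shattering of the perturbed set
    intro T' hT'
    set t := σ.filter (fun p => f p ∈ T') with htdef
    have ht : t ∈ σ.powerset := Finset.mem_powerset.mpr (Finset.filter_subset _ _)
    obtain ⟨C, hCd, hC⟩ := hε'spec t ht f (by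
      intro p hp
      calc dist (f p) p ≤ (n:ℝ) * η := hdistf p hp
        _ ≤ εm := le_trans (le_of_lt hnη) hm_le_εm
        _ ≤ ε' t := hmin0 t ht)
    refine ⟨C, hCd, ?_⟩
    ext x
    constructor
    · rintro ⟨hxC, hxσ'⟩
      obtain ⟨p, hp, rfl⟩ := Finset.mem_coe.mp hxσ' |> Finset.mem_image.mp
      have : p ∈ t := (hC p hp).mp hxC
      exact (Finset.mem_filter.mp this).2
    · intro hxT'
      have hxσ' : x ∈ (↑(σ.image f) : Set (Fin d → ℝ)) := hT' hxT'
      obtain ⟨p, hp, rfl⟩ := Finset.mem_coe.mp hxσ' |> Finset.mem_image.mp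
      have hpt : p ∈ t := Finset.mem_filter.mpr ⟨hp, hxT'⟩
      exact ⟨(hC p hp).mpr hpt, hxσ'⟩
  · -- genericity
    intro i x hx y hy hxy
    simp only [Finset.coe_image, Set.mem_image, Finset.mem_coe] at hx hy
    obtain ⟨p, hp, rfl⟩ := hx
    obtain ⟨q, hq, rfl⟩ := hy
    simp only at hxy
    exact congrArg f (hkey p hp q hq i hxy)

lemma upper (hd : 1 ≤ d) (σ : Finset (Fin d → ℝ)) (hshat : Shatters (Cd d) ↑σ) :
    σ.card ≤ (3 * d + 1) / 2 := by
  obtain ⟨σ', hcard, hshat', hgen⟩ := exists_generic hd σ hshat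
  have := upper_generic hd σ' hgen hshat'
  omega

end VCC
end

/-- For every `d ≥ 1`, the VC dimension of the set of closed balls in `ℓ∞^d`
equals `⌊(3d+1)/2⌋`. -/
theorem vcDim_Cd (d : ℕ) (hd : 1 ≤ d) :
    vcDim (Cd d) = (((3 * d + 1) / 2 : ℕ) : ℕ∞) := by
  apply le_antisymm
  · apply iSup_le
    intro σ
    apply iSup_le
    intro hσ
    exact Nat.cast_le.mpr (VCC.upper hd σ hσ)
  · have h1 : Shatters (Cd d) ↑(VCC.sig d) := VCC.sig_shatters d
    have h2 : (VCC.sig d).card = (3 * d + 1) / 2 := by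
      rw [VCC.sig_card]; unfold VCC.np; omega
    refine le_trans ?_
      (le_iSup (fun σ : Finset (Fin d → ℝ) =>
        ⨆ (_ : Shatters (Cd d) ↑σ), (σ.card : ℕ∞)) (VCC.sig d))
    rw [iSup_pos h1, h2]
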